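/- Under the implicit LU recursion the Abaffian has the block structure H_{i+1} = [[0, 0], [K_i, I_{n−i}]]: for every row index j ≤ i, the j-th row of H_{i+1} is zero, and for all row and column indices j, k > i one has (H_{i+1})_{jk} = 1 if j = k and 0 otherwise. -/

import Mathlib

open Matrix

private lemma abaffian_step {n : ℕ} (H : Matrix (Fin n) (Fin n) ℝ) (p : Fin n)
    (v : Fin n → ℝ)
    (hd : Pi.single p 1 ⬝ᵥ (H *ᵥ v) ≠ 0)
    (hrows : ∀ j : Fin n, (j : ℕ) < (p : ℕ) → ∀ k, H j k = 0)
    (hblock : ∀ j k : Fin n, (p : ℕ) ≤ (j : ℕ) → (p : ℕ) ≤ (k : ℕ) →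
      H j k = if j = k then 1 else 0) :
    (∀ j : Fin n, (j : ℕ) ≤ (p : ℕ) → ∀ k,
      (H - (Pi.single p 1 ⬝ᵥ (H *ᵥ v))⁻¹ •
        vecMulVec (H *ᵥ v) (Pi.single p 1 ᵥ* H)) j k = 0) ∧
    (∀ j k : Fin n, (p : ℕ) < (j : ℕ) → (p : ℕ) < (k : ℕ) →
      (H - (Pi.single p 1 ⬝ᵥ (H *ᵥ v))⁻¹ •
        vecMulVec (H *ᵥ v) (Pi.single p 1 ᵥ* H)) j k = if j = k then 1 else 0) := by
  have hδe : Pi.single p 1 ⬝ᵥ (H *ᵥ v) = (H *ᵥ v) p := by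
    rw [single_dotProduct, one_mul]
  have hrow : Pi.single p (1 : ℝ) ᵥ* H = H p := single_one_vecMul p H
  constructor
  · intro j hj k
    simp only [Matrix.sub_apply, Matrix.smul_apply, vecMulVec_apply, smul_eq_mul, hrow]
    rcases lt_or_eq_of_le hj with hlt | heq
    · have h1 : H j k = 0 := hrows j hlt k
      have h2 : (H *ᵥ v) j = 0 := by
        simp only [mulVec, dotProduct]
        refine Finset.sum_eq_zero fun l _ => ?_
        rw [hrows j hlt l, zero_mul]
      rw [h1, h2]; ring
    · have hjp : j = p := Fin.ext heq
      have hd' : (H *ᵥ v) p ≠ 0 := hδe ▸ hd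
      rw [hjp, hδe.symm]
      field_simp
      ring
  · intro j k hj hk
    simp only [Matrix.sub_apply, Matrix.smul_apply, vecMulVec_apply, smul_eq_mul, hrow]
    have hpk : H p k = 0 := by
      rw [hblock p k le_rfl (le_of_lt hk), if_neg]
      intro h; subst h; exact lt_irrefl _ hk
    rw [hpk, mul_zero, mul_zero, sub_zero]
    exact hblock j k (le_of_lt hj) (le_of_lt hk)

/-- Under the implicit LU recursion the Abaffian has the block structure
`H (i+1) = [[0, 0], [K_i, I_{n-i}]]`: the first `i` rows are zero and the
trailing `(n-i) × (n-i)` principal block is the identity. -/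
theorem implicit_lu_abaffian_structure
    (m n : ℕ) (hmn : m ≤ n) (A : Matrix (Fin m) (Fin n) ℝ)
    (H : ℕ → Matrix (Fin n) (Fin n) ℝ)
    (hH1 : H 1 = 1)
    (hδ : ∀ j (h1 : 1 ≤ j) (h2 : j ≤ m),
      Pi.single (⟨j - 1, by omega⟩ : Fin n) 1 ⬝ᵥ
        (H j *ᵥ (Aᵀ *ᵥ Pi.single (⟨j - 1, by omega⟩ : Fin m) 1)) ≠ 0)
    (hupd : ∀ j (h1 : 1 ≤ j) (h2 : j ≤ m),
      H (j + 1) = H j -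
        (Pi.single (⟨j - 1, by omega⟩ : Fin n) 1 ⬝ᵥ
          (H j *ᵥ (Aᵀ *ᵥ Pi.single (⟨j - 1, by omega⟩ : Fin m) 1)))⁻¹ •
        vecMulVec (H j *ᵥ (Aᵀ *ᵥ Pi.single (⟨j - 1, by omega⟩ : Fin m) 1))
          (Pi.single (⟨j - 1, by omega⟩ : Fin n) 1 ᵥ* H j)) :
    ∀ i (h1 : 1 ≤ i) (h2 : i ≤ m),
      (∀ j : Fin n, (j : ℕ) < i → ∀ k : Fin n, H (i + 1) j k = 0) ∧
      (∀ j k : Fin n, i ≤ (j : ℕ) → i ≤ (k : ℕ) →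
        H (i + 1) j k = if j = k then 1 else 0) := by
  intro i h1 h2
  induction i, h1 using Nat.le_induction with
  | base =>
    have hu := hupd 1 le_rfl h2
    have hd := hδ 1 le_rfl h2
    rw [hu]
    have hstep := abaffian_step (H 1) (⟨1 - 1, by omega⟩ : Fin n)
      (Aᵀ *ᵥ Pi.single (⟨1 - 1, by omega⟩ : Fin m) 1) hd
      (fun j hj k => absurd (show (j : ℕ) < 1 - 1 from hj) (by omega))
      (fun j k _ _ => by rw [hH1]; exact Matrix.one_apply)
    exact ⟨fun j hj k => hstep.1 j (by show (j : ℕ) ≤ 1 - 1; omega) k,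
      fun j k hj hk => hstep.2 j k (by show 1 - 1 < (j : ℕ); omega)
        (by show 1 - 1 < (k : ℕ); omega)⟩
  | succ i hi IH =>
    have hile : i ≤ m := by omega
    obtain ⟨IH1, IH2⟩ := IH hile
    have hu := hupd (i + 1) (by omega) h2
    have hd := hδ (i + 1) (by omega) h2
    rw [hu]
    have hstep := abaffian_step (H (i + 1)) (⟨i + 1 - 1, by omega⟩ : Fin n)
      (Aᵀ *ᵥ Pi.single (⟨i + 1 - 1, by omega⟩ : Fin m) 1) hd
      (fun j hj k => IH1 j (by have : (j : ℕ) < i + 1 - 1 := hj; omega) k)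
      (fun j k hj hk => IH2 j k
        (by have : (i : ℕ) + 1 - 1 ≤ (j : ℕ) := hj; omega)
        (by have : (i : ℕ) + 1 - 1 ≤ (k : ℕ) := hk; omega))
    exact ⟨fun j hj k => hstep.1 j (by show (j : ℕ) ≤ i + 1 - 1; omega) k,
      fun j k hj hk => hstep.2 j k (by show i + 1 - 1 < (j : ℕ); omega)
        (by show i + 1 - 1 < (k : ℕ); omega)⟩
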